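/- Let n₁ ≥ 1 be an integer and K ∈ ℝ, and let (λ₁,…,λ_{n₁}, μ₁,…,μ_{n₁}) be a real-analytic solution of the system (ODE) on an open interval I ⊆ ℝ. Then for every t ∈ I the following polynomial identity holds: −(4/3)·Σ λᵢ(t)μᵢ(t)² − (2/3)·τ(t)·Σ μᵢ(t)² + (4/9)·(Σ μᵢ(t))·(Σ λᵢ(t)μᵢ(t)) + (4/3)·τ(t)·Σ λᵢ(t)² + (2/9)·τ(t)·(Σ μᵢ(t))² + (1/2)·τ(t)³ − (2/3)(2n+1)K·τ(t) = 0. -/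

import Mathlib

/-- Lemma 5.1 (Lemma `P0`): any real-analytic solution of the ODE system on an
open interval satisfies the polynomial identity `P₀ = 0` pointwise. -/
theorem stmt_0 (n₁ : ℕ) (hn : 1 ≤ n₁) (K : ℝ)
    (I : Set ℝ) (hI : IsOpen I) (hIconn : I.OrdConnected)
    (lam mu : Fin n₁ → ℝ → ℝ)
    (hlam : ∀ i, AnalyticOnNhd ℝ (lam i) I)
    (hmu : ∀ i, AnalyticOnNhd ℝ (mu i) I)
    (tau : ℝ → ℝ) (htau : ∀ t, tau t = (2/3) * ∑ i, lam i t)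
    (hode1 : ∀ i, ∀ t ∈ I, HasDerivAt (lam i) ((tau t / 2 + lam i t) * mu i t) t)
    (hode2 : ∀ i, ∀ t ∈ I,
      HasDerivAt (mu i) ((mu i t) ^ 2 - tau t / 2 * lam i t + K) t)
    (hode3 : ∀ t ∈ I,
      -(deriv (deriv tau) t) + deriv tau t * (∑ i, mu i t)
        + tau t * ((tau t) ^ 2 / 4 - ((n₁ : ℝ) + 1) * K + ∑ i, (lam i t) ^ 2) = 0) :
    ∀ t ∈ I,
      -(4/3) * (∑ i, lam i t * (mu i t) ^ 2)
      - (2/3) * tau t * (∑ i, (mu i t) ^ 2)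
      + (4/9) * (∑ i, mu i t) * (∑ i, lam i t * mu i t)
      + (4/3) * tau t * (∑ i, (lam i t) ^ 2)
      + (2/9) * tau t * (∑ i, mu i t) ^ 2
      + (1/2) * (tau t) ^ 3
      - (2/3) * (2 * ((n₁ : ℝ) + 1) + 1) * K * tau t = 0 := by
  set g : ℝ → ℝ := fun s => tau s / 3 * (∑ i, mu i s) + 2/3 * ∑ i, lam i s * mu i s with hg
  have htauD : ∀ t ∈ I, HasDerivAt tau (g t) t := by
    intro t ht
    have hA : HasDerivAt (fun s => ∑ i, lam i s) (∑ i, (tau t / 2 + lam i t) * mu i t) t :=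
      HasDerivAt.fun_sum fun i _ => hode1 i t ht
    have h1 : HasDerivAt tau (2/3 * ∑ i, (tau t / 2 + lam i t) * mu i t) t := by
      exact (hA.const_mul (2/3)).congr_of_eventuallyEq
        (Filter.Eventually.of_forall fun s => htau s)
    have hsum : ∑ i, (tau t / 2 + lam i t) * mu i t
        = tau t / 2 * (∑ i, mu i t) + ∑ i, lam i t * mu i t := by
      rw [Finset.mul_sum, ← Finset.sum_add_distrib]
      exact Finset.sum_congr rfl fun i _ => by ring
    convert h1 using 1
    rw [hg, hsum]; ring
  intro t ht
  have hB : HasDerivAt (fun s => ∑ i, mu i s)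
      (∑ i, ((mu i t) ^ 2 - tau t / 2 * lam i t + K)) t :=
    HasDerivAt.fun_sum fun i _ => hode2 i t ht
  have hC : HasDerivAt (fun s => ∑ i, lam i s * mu i s)
      (∑ i, (((tau t / 2 + lam i t) * mu i t) * mu i t
        + lam i t * ((mu i t) ^ 2 - tau t / 2 * lam i t + K))) t :=
    HasDerivAt.fun_sum fun i _ => (hode1 i t ht).mul (hode2 i t ht)
  have hgD : HasDerivAt g
      (g t / 3 * (∑ i, mu i t)
        + tau t / 3 * (∑ i, ((mu i t) ^ 2 - tau t / 2 * lam i t + K))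
        + 2/3 * (∑ i, (((tau t / 2 + lam i t) * mu i t) * mu i t
            + lam i t * ((mu i t) ^ 2 - tau t / 2 * lam i t + K)))) t := by
    rw [hg]
    exact (((htauD t ht).div_const 3).mul hB).add (hC.const_mul (2/3))
  have hdt : deriv tau t = g t := (htauD t ht).deriv
  have hddt : deriv (deriv tau) t = g t / 3 * (∑ i, mu i t)
        + tau t / 3 * (∑ i, ((mu i t) ^ 2 - tau t / 2 * lam i t + K))
        + 2/3 * (∑ i, (((tau t / 2 + lam i t) * mu i t) * mu i t
            + lam i t * ((mu i t) ^ 2 - tau t / 2 * lam i t + K))) := by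
    have hev : deriv tau =ᶠ[nhds t] g :=
      Filter.eventuallyEq_of_mem (hI.mem_nhds ht) fun s hs => (htauD s hs).deriv
    rw [hev.deriv_eq]
    exact hgD.deriv
  have e1 : ∑ i, ((mu i t) ^ 2 - tau t / 2 * lam i t + K)
      = (∑ i, (mu i t) ^ 2) - tau t / 2 * (∑ i, lam i t) + (n₁ : ℝ) * K := by
    rw [Finset.sum_add_distrib, Finset.sum_sub_distrib, ← Finset.mul_sum, Finset.sum_const,
      Finset.card_univ, Fintype.card_fin, nsmul_eq_mul]
  have e2 : ∑ i, (((tau t / 2 + lam i t) * mu i t) * mu i t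
        + lam i t * ((mu i t) ^ 2 - tau t / 2 * lam i t + K))
      = tau t / 2 * (∑ i, (mu i t) ^ 2) + 2 * (∑ i, lam i t * (mu i t) ^ 2)
        - tau t / 2 * (∑ i, (lam i t) ^ 2) + K * (∑ i, lam i t) := by
    simp only [Finset.mul_sum, ← Finset.sum_add_distrib, ← Finset.sum_sub_distrib]
    exact Finset.sum_congr rfl fun i _ => by ring
  have h3 := hode3 t ht
  rw [hddt, hdt, e1, e2, hg] at h3
  simp only at h3
  linear_combination h3 + ((tau t) ^ 2 / 4 - K) * (htau t)
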